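/- The canonical inclusion of the n-th symmetric power (SPⁿ(X), d_n) into the multiset space (ℕ[X], d_{ℕ[X]}) is an isometric embedding; in particular X ↪ ℕ[X], x ↦ [x], is an isometric embedding. -/

import Mathlib

open Multiset Metric

variable {X : Type*}

/-- Matching cost between two multisets of equal cardinality: infimum over all
orderings of the summed distances. -/
noncomputable def matchCost [MetricSpace X] (s t : Multiset X) : ℝ :=
  sInf { c : ℝ | ∃ (l₁ l₂ : List X),
    (↑l₁ : Multiset X) = s ∧ (↑l₂ : Multiset X) = t ∧
    c = (List.zipWith dist l₁ l₂).sum }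

/-- Matching distance on finite multisets of a pointed metric space `(X, e)`:
pad both sides with copies of the basepoint and take the infimum over all matchings. -/
noncomputable def dN [MetricSpace X] (e : X) (s t : Multiset X) : ℝ :=
  sInf { c : ℝ | ∃ (l₁ l₂ : List X) (k j : ℕ),
    l₁.length = l₂.length ∧
    (↑l₁ : Multiset X) = s + Multiset.replicate k e ∧
    (↑l₂ : Multiset X) = t + Multiset.replicate j e ∧
    c = (List.zipWith dist l₁ l₂).sum }

/-- cost of a multiset of pairs -/
noncomputable def pairCost [MetricSpace X] (P : Multiset (X × X)) : ℝ :=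
  (P.map fun q => dist q.1 q.2).sum

lemma pairCost_nonneg [MetricSpace X] (P : Multiset (X × X)) : 0 ≤ pairCost P := by
  apply Multiset.sum_nonneg
  intro x hx
  obtain ⟨q, _, rfl⟩ := Multiset.mem_map.mp hx
  exact dist_nonneg

lemma pairCost_cons [MetricSpace X] (q : X × X) (P : Multiset (X × X)) :
    pairCost (q ::ₘ P) = dist q.1 q.2 + pairCost P := by
  simp [pairCost]

lemma zipWith_eq_map_zip [MetricSpace X] :
    ∀ (l₁ l₂ : List X), List.zipWith dist l₁ l₂ = (l₁.zip l₂).map fun q => dist q.1 q.2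
  | [], _ => by simp
  | _ :: _, [] => by simp
  | a :: l₁, b :: l₂ => by simp [zipWith_eq_map_zip l₁ l₂]

lemma zipWith_fst_snd [MetricSpace X] :
    ∀ (q : List (X × X)),
      List.zipWith dist (q.map Prod.fst) (q.map Prod.snd) = q.map fun p => dist p.1 p.2
  | [] => by simp
  | p :: q => by simp [zipWith_fst_snd q]

lemma zipWith_dist_sum_nonneg [MetricSpace X] (l₁ l₂ : List X) :
    0 ≤ (List.zipWith dist l₁ l₂).sum := by
  apply List.sum_nonneg
  intro x hx
  rw [zipWith_eq_map_zip] at hx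
  obtain ⟨q, _, rfl⟩ := List.mem_map.mp hx
  exact dist_nonneg

/-- Key reduction: any matching of `s + k•e` with `t + k•e` can be trimmed to a
matching of `s` with `t` of no larger cost. -/
lemma pairCost_coe [MetricSpace X] (l : List (X × X)) :
    pairCost (↑l : Multiset (X × X)) = (l.map fun p => dist p.1 p.2).sum := by
  simp [pairCost]

lemma key_reduction [MetricSpace X] (e : X) (s t : Multiset X) :
    ∀ (k : ℕ) (P : Multiset (X × X)),
      P.map Prod.fst = s + Multiset.replicate k e →
      P.map Prod.snd = t + Multiset.replicate k e →
      ∃ Q : Multiset (X × X), Q.map Prod.fst = s ∧ Q.map Prod.snd = t ∧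
        pairCost Q ≤ pairCost P := by
  classical
  intro k
  induction k with
  | zero => intro P h1 h2; exact ⟨P, by simpa using h1, by simpa using h2, le_refl _⟩
  | succ k ih =>
    intro P h1 h2
    by_cases hee : (e, e) ∈ P
    · obtain ⟨R, rfl⟩ := Multiset.exists_cons_of_mem hee
      rw [Multiset.map_cons] at h1 h2
      rw [Multiset.replicate_succ, Multiset.add_cons] at h1 h2
      have h1' : R.map Prod.fst = s + Multiset.replicate k e :=
        (Multiset.cons_inj_right e).mp h1
      have h2' : R.map Prod.snd = t + Multiset.replicate k e :=
        (Multiset.cons_inj_right e).mp h2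
      obtain ⟨Q, hQ1, hQ2, hQ3⟩ := ih R h1' h2'
      refine ⟨Q, hQ1, hQ2, hQ3.trans ?_⟩
      rw [pairCost_cons]
      simp
    · -- find a pair (e, b) in P and a pair (a, e) in P
      have hb : e ∈ P.map Prod.fst := by
        rw [h1]; exact Multiset.mem_add.mpr (Or.inr (by simp [Multiset.replicate_succ]))
      obtain ⟨⟨pa, b⟩, hebP, hp1⟩ := Multiset.mem_map.mp hb
      rw [show pa = e from hp1] at hebP
      clear hp1
      have ha : e ∈ P.map Prod.snd := by
        rw [h2]; exact Multiset.mem_add.mpr (Or.inr (by simp [Multiset.replicate_succ]))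
      obtain ⟨⟨a, qb⟩, haeP, hq1⟩ := Multiset.mem_map.mp ha
      rw [show qb = e from hq1] at haeP
      clear hq1
      have hne : (a, e) ≠ (e, b) := by
        intro hcontra
        rw [Prod.mk.injEq] at hcontra
        rw [hcontra.1] at haeP
        exact hee haeP
      have hae' : (a, e) ∈ P.erase (e, b) := (Multiset.mem_erase_of_ne hne).mpr haeP
      obtain ⟨R, hR⟩ := Multiset.exists_cons_of_mem hae'
      have hP : P = (e, b) ::ₘ (a, e) ::ₘ R := by
        rw [← hR, Multiset.cons_erase hebP]
      subst hP
      simp only [Multiset.map_cons] at h1 h2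
      rw [Multiset.replicate_succ, Multiset.add_cons] at h1 h2
      have h1' : (a ::ₘ R.map Prod.fst) = s + Multiset.replicate k e :=
        (Multiset.cons_inj_right e).mp h1
      have h2'' : (e ::ₘ b ::ₘ R.map Prod.snd) = e ::ₘ (t + Multiset.replicate k e) := by
        rw [← h2, Multiset.cons_swap]
      have h2' : (b ::ₘ R.map Prod.snd) = t + Multiset.replicate k e :=
        (Multiset.cons_inj_right e).mp h2''
      obtain ⟨Q, hQ1, hQ2, hQ3⟩ := ih ((a, b) ::ₘ R) (by simpa using h1') (by simpa using h2')
      refine ⟨Q, hQ1, hQ2, hQ3.trans ?_⟩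
      rw [pairCost_cons, pairCost_cons, pairCost_cons]
      have htri : dist a b ≤ dist a e + dist e b := dist_triangle a e b
      have hc := pairCost_nonneg R
      simp only
      linarith

lemma dN_eq_matchCost [MetricSpace X] (e : X) (s t : Multiset X)
    (h : Multiset.card s = Multiset.card t) : dN e s t = matchCost s t := by
  have hne_match : { c : ℝ | ∃ (l₁ l₂ : List X),
      (↑l₁ : Multiset X) = s ∧ (↑l₂ : Multiset X) = t ∧
      c = (List.zipWith dist l₁ l₂).sum }.Nonempty :=
    ⟨_, s.toList, t.toList, s.coe_toList, t.coe_toList, rfl⟩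
  have hbdd : BddBelow { c : ℝ | ∃ (l₁ l₂ : List X) (k j : ℕ),
      l₁.length = l₂.length ∧
      (↑l₁ : Multiset X) = s + Multiset.replicate k e ∧
      (↑l₂ : Multiset X) = t + Multiset.replicate j e ∧
      c = (List.zipWith dist l₁ l₂).sum } := by
    refine ⟨0, fun c hc => ?_⟩
    obtain ⟨l₁, l₂, k, j, _, _, _, rfl⟩ := hc
    exact zipWith_dist_sum_nonneg l₁ l₂
  have hbdd_match : BddBelow { c : ℝ | ∃ (l₁ l₂ : List X),
      (↑l₁ : Multiset X) = s ∧ (↑l₂ : Multiset X) = t ∧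
      c = (List.zipWith dist l₁ l₂).sum } := by
    refine ⟨0, fun c hc => ?_⟩
    obtain ⟨l₁, l₂, _, _, rfl⟩ := hc
    exact zipWith_dist_sum_nonneg l₁ l₂
  apply le_antisymm
  · -- dN ≤ matchCost : every honest matching is a padded matching with k = j = 0
    apply csInf_le_csInf hbdd hne_match
    rintro c ⟨l₁, l₂, h1, h2, rfl⟩
    refine ⟨l₁, l₂, 0, 0, ?_, by simpa using h1, by simpa using h2, rfl⟩
    have : Multiset.card (↑l₁ : Multiset X) = Multiset.card (↑l₂ : Multiset X) := by
      rw [h1, h2, h]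
    simpa using this
  · -- matchCost ≤ dN : trim paddings using triangle inequality
    apply le_csInf
    · refine ⟨_, s.toList, t.toList, 0, 0, ?_, by simp, by simp, rfl⟩
      rw [Multiset.length_toList, Multiset.length_toList, h]
    rintro c ⟨l₁, l₂, k, j, hlen, h1, h2, rfl⟩
    -- cards force k = j
    have hcard : Multiset.card s + k = Multiset.card t + j := by
      have c1 : l₁.length = Multiset.card s + k := by
        have := congrArg Multiset.card h1
        simpa using this
      have c2 : l₂.length = Multiset.card t + j := by
        have := congrArg Multiset.card h2
        simpa using this
      rw [← c1, ← c2, hlen]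
    have hkj : k = j := by omega
    subst hkj
    set P : Multiset (X × X) := ↑(l₁.zip l₂) with hP
    have hfst : P.map Prod.fst = s + Multiset.replicate k e := by
      rw [hP, ← h1]
      exact congrArg _ (List.map_fst_zip (le_of_eq hlen))
    have hsnd : P.map Prod.snd = t + Multiset.replicate k e := by
      rw [hP, ← h2]
      exact congrArg _ (List.map_snd_zip (ge_of_eq hlen))
    obtain ⟨Q, hQ1, hQ2, hQ3⟩ := key_reduction e s t k P hfst hsnd
    have hcost : pairCost P = (List.zipWith dist l₁ l₂).sum := by
      rw [hP, pairCost, zipWith_eq_map_zip]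
      simp
    refine le_trans (csInf_le hbdd_match ?_) (hcost ▸ hQ3)
    refine ⟨Q.toList.map Prod.fst, Q.toList.map Prod.snd, ?_, ?_, ?_⟩
    · rw [← Multiset.map_coe, Q.coe_toList, hQ1]
    · rw [← Multiset.map_coe, Q.coe_toList, hQ2]
    · rw [zipWith_fst_snd, ← pairCost_coe, Q.coe_toList]

/-- The canonical inclusion `(SPⁿ(X), d_n) ↪ (ℕ[X], d_{ℕ[X]})` is an isometric
embedding: on multisets of a common cardinality `n`, the matching distance `d_{ℕ[X]}`
equals `d_n`.  In particular `X ↪ ℕ[X]`, `x ↦ [x]`, is an isometric embedding. -/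
theorem SPn_isometric_in_NX [MetricSpace X] (e : X) (n : ℕ) :
    (∀ s t : Multiset X, Multiset.card s = n → Multiset.card t = n →
      dN e s t = matchCost s t) ∧
    (∀ x y : X, dN e {x} {y} = dist x y) := by
  constructor
  · intro s t hs ht
    exact dN_eq_matchCost e s t (hs.trans ht.symm)
  · intro x y
    rw [dN_eq_matchCost e {x} {y} (by simp)]
    have : { c : ℝ | ∃ (l₁ l₂ : List X),
        (↑l₁ : Multiset X) = ({x} : Multiset X) ∧ (↑l₂ : Multiset X) = ({y} : Multiset X) ∧
        c = (List.zipWith dist l₁ l₂).sum } = {dist x y} := by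
      ext c
      simp only [Set.mem_setOf_eq, Set.mem_singleton_iff]
      constructor
      · rintro ⟨l₁, l₂, h1, h2, rfl⟩
        rw [Multiset.coe_eq_singleton] at h1 h2
        subst h1; subst h2
        simp
      · rintro rfl
        exact ⟨[x], [y], by simp, by simp, by simp⟩
    rw [matchCost, this, csInf_singleton]
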